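/- For each i ∈ I = {1,…,m}, let f_i : ℝⁿ → ℝ be convex and continuous with C := ⋂_{i∈I} S(f_i, 0) ≠ ∅, and let {x^k} be generated by the double-layer subgradient projection algorithm x^{k+1} := x^k + α_k(Σ_{i∈I_k} ω_i^k P_{f_i} x^k − x^k) under conditions (i) and (ii), and assume (iii): if lim_{k→∞} max_{i∈I_k} f_i⁺(x^k) = 0 then lim_{k→∞} max_{j∈J_k} f_j⁺(x^k) = 0. Then {x^k} converges in norm to some point x^∞ ∈ C. -/

import Mathlib

open Filter Metric Bornology RealInnerProductSpace

/-- The subgradient projection associated with `f` and a subgradient selection `g`. -/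
noncomputable def subgradProj {E : Type*} [NormedAddCommGroup E] [InnerProductSpace ℝ E]
    (f : E → ℝ) (g : E → E) : E → E := fun x =>
  if 0 < f x then x - (f x / ‖g x‖ ^ 2) • g x else x

section aux
variable {E : Type*} [NormedAddCommGroup E] [InnerProductSpace ℝ E]

lemma sub_subgradProj_of_pos (f : E → ℝ) (g : E → E) (x : E) (h : 0 < f x) :
    x - subgradProj f g x = (f x / ‖g x‖ ^ 2) • g x := by
  simp [subgradProj, h]

lemma subgradProj_of_nonpos (f : E → ℝ) (g : E → E) (x : E) (h : ¬ 0 < f x) :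
    subgradProj f g x = x := if_neg h

lemma subgrad_ne_zero (f : E → ℝ) (g : E → E)
    (hsub : ∀ y z : E, f y + ⟪g y, z - y⟫ ≤ f z) {x z : E} (hz : f z ≤ 0)
    (hx : 0 < f x) : g x ≠ 0 := by
  intro h0
  have := hsub x z
  rw [h0, inner_zero_left] at this
  linarith

lemma norm_sub_subgradProj_mul (f : E → ℝ) (g : E → E) (x : E) (hx : 0 < f x)
    (hg : g x ≠ 0) : ‖x - subgradProj f g x‖ * ‖g x‖ = f x := by
  have hgn : (0:ℝ) < ‖g x‖ := norm_pos_iff.mpr hg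
  rw [sub_subgradProj_of_pos f g x hx, norm_smul, Real.norm_eq_abs,
    abs_of_pos (by positivity)]
  field_simp

lemma subgradProj_inner_ge (f : E → ℝ) (g : E → E)
    (hsub : ∀ y z : E, f y + ⟪g y, z - y⟫ ≤ f z) (x z : E) (hz : f z ≤ 0) :
    ‖x - subgradProj f g x‖ ^ 2 ≤ ⟪x - subgradProj f g x, x - z⟫ := by
  by_cases h : 0 < f x
  · have hg : g x ≠ 0 := subgrad_ne_zero f g hsub hz h
    have hgn : (0:ℝ) < ‖g x‖ := norm_pos_iff.mpr hg
    have hinner : f x ≤ ⟪g x, x - z⟫ := by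
      have h1 := hsub x z
      have h2 : ⟪g x, z - x⟫ = - ⟪g x, x - z⟫ := by
        rw [← inner_neg_right]; congr 1; abel
      linarith
    rw [sub_subgradProj_of_pos f g x h, real_inner_smul_left, norm_smul,
      Real.norm_eq_abs, abs_of_pos (by positivity)]
    have hc : (0:ℝ) < f x / ‖g x‖ ^ 2 := by positivity
    have hkey : (f x / ‖g x‖ ^ 2 * ‖g x‖) ^ 2 = (f x / ‖g x‖ ^ 2) * f x := by
      field_simp
    rw [hkey]
    exact mul_le_mul_of_nonneg_left hinner hc.le
  · rw [subgradProj_of_nonpos f g x h]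
    simp

end aux

set_option maxHeartbeats 1000000 in
/-- Norm convergence of the double-layer subgradient projection
algorithm in ℝⁿ. -/
theorem doubleLayer_subgradient_convergence_Rn
    {n : ℕ} {m : ℕ} [NeZero m]
    (f : Fin m → EuclideanSpace ℝ (Fin n) → ℝ)
    (g : Fin m → EuclideanSpace ℝ (Fin n) → EuclideanSpace ℝ (Fin n))
    (hconv : ∀ i, ConvexOn ℝ Set.univ (f i)) (hcont : ∀ i, Continuous (f i))
    (hsub : ∀ i, ∀ y z : EuclideanSpace ℝ (Fin n), f i y + ⟪g i y, z - y⟫ ≤ f i z)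
    (hC : (⋂ i, {z : EuclideanSpace ℝ (Fin n) | f i z ≤ 0}).Nonempty)
    (x : ℕ → EuclideanSpace ℝ (Fin n)) (Ik Jk : ℕ → Finset (Fin m))
    (α : ℕ → ℝ) (ω : ℕ → Fin m → ℝ)
    (hIkne : ∀ k, (Ik k).Nonempty) (hIJ : ∀ k, Ik k ⊆ Jk k)
    (αminus αplus ωminus : ℝ)
    (hαminus : αminus ∈ Set.Ioc (0 : ℝ) 1) (hαplus : αplus ∈ Set.Ico (1 : ℝ) 2)
    (hωminus : ωminus ∈ Set.Ioc (0 : ℝ) 1)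
    (hα : ∀ k, α k ∈ Set.Icc αminus αplus)
    (hω : ∀ k, ∀ i ∈ Ik k, ω k i ∈ Set.Icc ωminus 1)
    (hωsum : ∀ k, ∑ i ∈ Ik k, ω k i = 1)
    (hrec : ∀ k, x (k + 1) =
      x k + α k • ((∑ i ∈ Ik k, ω k i • subgradProj (f i) (g i) (x k)) - x k))
    (s : ℕ) (hs : 1 ≤ s)
    (hcover : ∀ k, ∀ i : Fin m, ∃ l < s, i ∈ Jk (k + l))
    (hiii : Tendsto (fun k => (Ik k).sup' (hIkne k) fun i => max 0 (f i (x k)))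
        atTop (nhds 0) →
      Tendsto (fun k => (Jk k).sup' ((hIkne k).mono (hIJ k)) fun i =>
        max 0 (f i (x k))) atTop (nhds 0)) :
    ∃ xinf ∈ ⋂ i, {z : EuclideanSpace ℝ (Fin n) | f i z ≤ 0},
      Tendsto x atTop (nhds xinf) := by
  obtain ⟨z₀, hz₀⟩ := hC
  have hz₀' : ∀ i, f i z₀ ≤ 0 := fun i => Set.mem_iInter.mp hz₀ i
  set u : ℕ → Fin m → EuclideanSpace ℝ (Fin n) := fun k i => x k - subgradProj (f i) (g i) (x k) with hu
  set S : ℕ → ℝ := fun k => ∑ i ∈ Ik k, ω k i * ‖u k i‖ ^ 2 with hS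
  have hαk : ∀ k, 0 < α k ∧ α k < 2 := fun k =>
    ⟨lt_of_lt_of_le hαminus.1 (hα k).1, lt_of_le_of_lt (hα k).2 hαplus.2⟩
  have hωpos : ∀ k, ∀ i ∈ Ik k, 0 < ω k i := fun k i hi =>
    lt_of_lt_of_le hωminus.1 (hω k i hi).1
  have hSnonneg : ∀ k, 0 ≤ S k := fun k =>
    Finset.sum_nonneg fun i hi => mul_nonneg (hωpos k i hi).le (sq_nonneg _)
  -- recursion rewritten
  have hsum_u : ∀ k, ∑ i ∈ Ik k, ω k i • u k i =
      x k - ∑ i ∈ Ik k, ω k i • subgradProj (f i) (g i) (x k) := by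
    intro k
    simp only [hu, smul_sub]
    rw [Finset.sum_sub_distrib, ← Finset.sum_smul, hωsum k, one_smul]
  have hd : ∀ k, x (k + 1) = x k - α k • (∑ i ∈ Ik k, ω k i • u k i) := by
    intro k
    rw [hrec k, hsum_u k, smul_sub, smul_sub]
    abel
  -- Jensen-type bound
  have hdS : ∀ k, ‖∑ i ∈ Ik k, ω k i • u k i‖ ^ 2 ≤ S k := by
    intro k
    have h1 : ‖∑ i ∈ Ik k, ω k i • u k i‖ ≤ ∑ i ∈ Ik k, ω k i * ‖u k i‖ := by
      refine (norm_sum_le _ _).trans (le_of_eq (Finset.sum_congr rfl fun i hi => ?_))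
      rw [norm_smul, Real.norm_eq_abs, abs_of_pos (hωpos k i hi)]
    have h2 : (∑ i ∈ Ik k, ω k i * ‖u k i‖) ^ 2 ≤ S k := by
      have := Finset.sum_mul_sq_le_sq_mul_sq (Ik k)
        (fun i => Real.sqrt (ω k i)) (fun i => Real.sqrt (ω k i) * ‖u k i‖)
      have e1 : ∀ i ∈ Ik k, Real.sqrt (ω k i) * (Real.sqrt (ω k i) * ‖u k i‖)
          = ω k i * ‖u k i‖ := by
        intro i hi
        rw [← mul_assoc, Real.mul_self_sqrt (hωpos k i hi).le]
      have e2 : ∀ i ∈ Ik k, Real.sqrt (ω k i) ^ 2 = ω k i := fun i hi =>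
        Real.sq_sqrt (hωpos k i hi).le
      have e3 : ∀ i ∈ Ik k, (Real.sqrt (ω k i) * ‖u k i‖) ^ 2
          = ω k i * ‖u k i‖ ^ 2 := by
        intro i hi
        rw [mul_pow, Real.sq_sqrt (hωpos k i hi).le]
      rw [Finset.sum_congr rfl e1, Finset.sum_congr rfl e2,
        Finset.sum_congr rfl e3, hωsum k, one_mul] at this
      exact this
    calc ‖∑ i ∈ Ik k, ω k i • u k i‖ ^ 2
        ≤ (∑ i ∈ Ik k, ω k i * ‖u k i‖) ^ 2 := by
          apply pow_le_pow_left₀ (norm_nonneg _) h1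
      _ ≤ S k := h2
  -- key Fejér inequality
  have key : ∀ z : EuclideanSpace ℝ (Fin n), (∀ i, f i z ≤ 0) → ∀ k,
      ‖x (k + 1) - z‖ ^ 2 + α k * (2 - α k) * S k ≤ ‖x k - z‖ ^ 2 := by
    intro z hz k
    have hSd : S k ≤ ⟪∑ i ∈ Ik k, ω k i • u k i, x k - z⟫ := by
      rw [sum_inner]
      refine Finset.sum_le_sum fun i hi => ?_
      rw [real_inner_smul_left]
      exact mul_le_mul_of_nonneg_left
        (subgradProj_inner_ge (f i) (g i) (hsub i) (x k) z (hz i)) (hωpos k i hi).le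
    have hx1 : x (k + 1) - z = (x k - z) - α k • (∑ i ∈ Ik k, ω k i • u k i) := by
      rw [hd k]; abel
    rw [hx1, norm_sub_sq_real, real_inner_smul_right, norm_smul, Real.norm_eq_abs,
      abs_of_pos (hαk k).1, mul_pow]
    have hsymm : ⟪x k - z, ∑ i ∈ Ik k, ω k i • u k i⟫
        = ⟪∑ i ∈ Ik k, ω k i • u k i, x k - z⟫ := real_inner_comm _ _
    rw [hsymm]
    nlinarith [hdS k, hSd, (hαk k).1, (hαk k).2, hSnonneg k,
      mul_le_mul_of_nonneg_left hSd (by linarith [(hαk k).1] : (0:ℝ) ≤ 2 * α k),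
      mul_le_mul_of_nonneg_left (hdS k) (sq_nonneg (α k))]
  -- monotonicity and boundedness w.r.t. z₀
  have hquad : ∀ k, 0 ≤ α k * (2 - α k) * S k := fun k =>
    mul_nonneg (mul_nonneg (hαk k).1.le (by linarith [(hαk k).2])) (hSnonneg k)
  have hnormle : ∀ k, ‖x k - z₀‖ ^ 2 ≤ ‖x 0 - z₀‖ ^ 2 := by
    intro k
    induction k with
    | zero => exact le_refl _
    | succ k ih =>
      have h1 := key z₀ hz₀' k
      have h2 := hquad k
      linarith
  set R := ‖x 0 - z₀‖ with hR
  have hxball : ∀ k, x k ∈ closedBall z₀ R := by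
    intro k
    rw [mem_closedBall, dist_eq_norm]
    have := Real.sqrt_le_sqrt (hnormle k)
    rwa [Real.sqrt_sq (norm_nonneg _), Real.sqrt_sq (norm_nonneg _)] at this
  -- summability of S
  have hcpos : 0 < αminus * (2 - αplus) := by nlinarith [hαminus.1, hαplus.2]
  have hterm : ∀ k, αminus * (2 - αplus) * S k ≤ α k * (2 - α k) * S k := by
    intro k
    refine mul_le_mul_of_nonneg_right ?_ (hSnonneg k)
    have h1 := (hα k).1; have h2 := (hα k).2
    have := hαminus.1; have := hαplus.2
    nlinarith
  have hSsum : Summable S := by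
    refine summable_of_sum_range_le hSnonneg
      (c := ‖x 0 - z₀‖ ^ 2 / (αminus * (2 - αplus))) fun N => ?_
    rw [le_div_iff₀ hcpos]
    have htel : ∑ k ∈ Finset.range N, (‖x k - z₀‖ ^ 2 - ‖x (k + 1) - z₀‖ ^ 2)
        = ‖x 0 - z₀‖ ^ 2 - ‖x N - z₀‖ ^ 2 :=
      Finset.sum_range_sub' (fun k => ‖x k - z₀‖ ^ 2) N
    have h1 : ∑ k ∈ Finset.range N, αminus * (2 - αplus) * S k
        ≤ ∑ k ∈ Finset.range N, (‖x k - z₀‖ ^ 2 - ‖x (k + 1) - z₀‖ ^ 2) := by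
      refine Finset.sum_le_sum fun k _ => ?_
      have := key z₀ hz₀' k
      have := hterm k
      linarith
    rw [htel] at h1
    have h2 : (0:ℝ) ≤ ‖x N - z₀‖ ^ 2 := sq_nonneg _
    calc (∑ k ∈ Finset.range N, S k) * (αminus * (2 - αplus))
        = ∑ k ∈ Finset.range N, αminus * (2 - αplus) * S k := by
          rw [Finset.sum_mul]; exact Finset.sum_congr rfl fun k _ => by ring
      _ ≤ ‖x 0 - z₀‖ ^ 2 := by linarith
  have hS0 : Tendsto S atTop (nhds 0) := hSsum.tendsto_atTop_zero
  -- step norms tend to zero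
  have hd2 : ∀ k, ‖x (k + 1) - x k‖ ^ 2 ≤ 4 * S k := by
    intro k
    have h1 : x (k + 1) - x k = -(α k • (∑ i ∈ Ik k, ω k i • u k i)) := by
      rw [hd k]; abel
    rw [h1, norm_neg, norm_smul, Real.norm_eq_abs, abs_of_pos (hαk k).1, mul_pow]
    have h4 : α k ^ 2 ≤ 4 := by nlinarith [(hαk k).1, (hαk k).2]
    exact mul_le_mul h4 (hdS k) (sq_nonneg _) (by norm_num)
  have hsqrtS : Tendsto (fun k => Real.sqrt (4 * S k)) atTop (nhds 0) := by
    have h4 : Tendsto (fun k => 4 * S k) atTop (nhds 0) := by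
      simpa using hS0.const_mul 4
    have := (Real.continuous_sqrt.tendsto 0).comp h4
    simpa only [Function.comp_def, Real.sqrt_zero] using this
  have hstep0 : Tendsto (fun k => ‖x (k + 1) - x k‖) atTop (nhds 0) :=
    squeeze_zero (fun k => norm_nonneg _)
      (fun k => Real.le_sqrt_of_sq_le (hd2 k)) hsqrtS
  -- uniform bound on subgradient norms along the sequence, and f⁺ bound
  have hGex : ∀ i : Fin m, ∃ G : ℝ, 0 ≤ G ∧ ∀ k, max 0 (f i (x k)) ≤ G * ‖u k i‖ := by
    intro i
    have hKc : IsCompact (closedBall z₀ (R + 1)) := isCompact_closedBall z₀ (R + 1)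
    have hKne : (closedBall z₀ (R + 1)).Nonempty :=
      ⟨z₀, mem_closedBall_self (by positivity)⟩
    obtain ⟨yM, hyM, hM⟩ := hKc.exists_isMaxOn hKne (hcont i).continuousOn
    obtain ⟨ym, hym, hm⟩ := hKc.exists_isMinOn hKne (hcont i).continuousOn
    have hxK : ∀ k, x k ∈ closedBall z₀ (R + 1) := fun k =>
      closedBall_subset_closedBall (by linarith) (hxball k)
    refine ⟨f i yM - f i ym, sub_nonneg.mpr (hm hyM), fun k => ?_⟩
    by_cases hfx : 0 < f i (x k)
    · have hg : g i (x k) ≠ 0 := subgrad_ne_zero (f i) (g i) (hsub i) (hz₀' i) hfx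
      have hgn : (0:ℝ) < ‖g i (x k)‖ := norm_pos_iff.mpr hg
      have hnu := norm_sub_subgradProj_mul (f i) (g i) (x k) hfx hg
      have hyK : x k + ‖g i (x k)‖⁻¹ • g i (x k) ∈ closedBall z₀ (R + 1) := by
        rw [mem_closedBall]
        have h1 : dist (x k + ‖g i (x k)‖⁻¹ • g i (x k)) (x k) = 1 := by
          rw [dist_eq_norm, add_sub_cancel_left, norm_smul, Real.norm_eq_abs,
            abs_of_pos (by positivity), inv_mul_cancel₀ hgn.ne']
        have h2 : dist (x k) z₀ ≤ R := hxball k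
        calc dist (x k + ‖g i (x k)‖⁻¹ • g i (x k)) z₀
            ≤ dist (x k + ‖g i (x k)‖⁻¹ • g i (x k)) (x k) + dist (x k) z₀ :=
              dist_triangle _ _ _
          _ ≤ R + 1 := by rw [h1]; linarith
      have h1 := hsub i (x k) (x k + ‖g i (x k)‖⁻¹ • g i (x k))
      have h2 : ⟪g i (x k), (x k + ‖g i (x k)‖⁻¹ • g i (x k)) - x k⟫
          = ‖g i (x k)‖ := by
        rw [add_sub_cancel_left, real_inner_smul_right,
          real_inner_self_eq_norm_sq]
        field_simp
      rw [h2] at h1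
      have h3 : f i (x k + ‖g i (x k)‖⁻¹ • g i (x k)) ≤ f i yM := hM hyK
      have h4 : f i ym ≤ f i (x k) := hm (hxK k)
      have hgle : ‖g i (x k)‖ ≤ f i yM - f i ym := by linarith
      have h5 : max 0 (f i (x k)) = f i (x k) := max_eq_right hfx.le
      rw [h5, ← hnu, mul_comm ‖x k - subgradProj (f i) (g i) (x k)‖ _]
      exact mul_le_mul_of_nonneg_right hgle (norm_nonneg _)
    · have hu0 : u k i = 0 := by
        simp only [hu, subgradProj_of_nonpos (f i) (g i) (x k) hfx, sub_self]
      rw [hu0, norm_zero, mul_zero, max_eq_left (le_of_not_gt hfx)]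
  choose G hG0 hGle using hGex
  set Gs : ℝ := ∑ i : Fin m, G i with hGs
  have hGsle : ∀ i, G i ≤ Gs :=
    fun i => Finset.single_le_sum (fun j _ => hG0 j) (Finset.mem_univ i)
  have hGs0 : 0 ≤ Gs := Finset.sum_nonneg fun j _ => hG0 j
  have hule : ∀ k, ∀ i ∈ Ik k, ‖u k i‖ ≤ Real.sqrt (S k / ωminus) := by
    intro k i hi
    refine Real.le_sqrt_of_sq_le ?_
    rw [le_div_iff₀ hωminus.1]
    calc ‖u k i‖ ^ 2 * ωminus = ωminus * ‖u k i‖ ^ 2 := by ring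
      _ ≤ ω k i * ‖u k i‖ ^ 2 :=
          mul_le_mul_of_nonneg_right (hω k i hi).1 (sq_nonneg _)
      _ ≤ S k := Finset.single_le_sum
          (f := fun j => ω k j * ‖u k j‖ ^ 2)
          (fun j hj => mul_nonneg (hωpos k j hj).le (sq_nonneg _)) hi
  have hsqrtS' : Tendsto (fun k => Gs * Real.sqrt (S k / ωminus)) atTop (nhds 0) := by
    have h4 : Tendsto (fun k => S k / ωminus) atTop (nhds 0) := by
      simpa using hS0.div_const ωminus
    have h5 := (Real.continuous_sqrt.tendsto 0).comp h4
    simp only [Function.comp_def, Real.sqrt_zero] at h5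
    simpa using h5.const_mul Gs
  have hIsup0 : Tendsto (fun k => (Ik k).sup' (hIkne k) fun i => max 0 (f i (x k)))
      atTop (nhds 0) := by
    refine squeeze_zero (fun k => ?_) (fun k => ?_) hsqrtS'
    · obtain ⟨i, hi⟩ := hIkne k
      exact le_trans (le_max_left 0 (f i (x k)))
        (Finset.le_sup' (fun i => max 0 (f i (x k))) hi)
    · refine Finset.sup'_le _ _ fun i hi => ?_
      calc max 0 (f i (x k)) ≤ G i * ‖u k i‖ := hGle i k
        _ ≤ Gs * Real.sqrt (S k / ωminus) :=
            mul_le_mul (hGsle i) (hule k i hi) (norm_nonneg _) hGs0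
  have hJsup0 := hiii hIsup0
  -- Bolzano–Weierstrass
  obtain ⟨xb, hxbK, φ, hφ, hφx⟩ := (isCompact_closedBall z₀ R).tendsto_subseq hxball
  have hxbC : ∀ i, f i xb ≤ 0 := by
    intro i
    choose l hls hlJ using fun j => hcover (φ j) i
    have hψtop : Tendsto (fun j => φ j + l j) atTop atTop :=
      tendsto_atTop_mono (fun j => le_trans hφ.le_apply (Nat.le_add_right _ _))
        tendsto_id
    have hxy : Tendsto (fun j => x (φ j + l j)) atTop (nhds xb) := by
      have hB : Tendsto (fun j => ∑ t ∈ Finset.range s,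
          ‖x (φ j + t + 1) - x (φ j + t)‖) atTop (nhds 0) := by
        have hsum := tendsto_finset_sum (Finset.range s)
          (fun t _ => hstep0.comp (tendsto_atTop_mono
            (fun j => le_trans hφ.le_apply (Nat.le_add_right _ t)) tendsto_id
            : Tendsto (fun j => φ j + t) atTop atTop))
        simpa using hsum
      have hdist : ∀ j, dist (x (φ j + l j)) (x (φ j))
          ≤ ∑ t ∈ Finset.range s, ‖x (φ j + t + 1) - x (φ j + t)‖ := by
        intro j
        have h1 := dist_le_range_sum_dist (fun t => x (φ j + t)) (l j)
        have h2 : ∑ t ∈ Finset.range (l j), dist (x (φ j + t)) (x (φ j + t + 1))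
            ≤ ∑ t ∈ Finset.range s, ‖x (φ j + t + 1) - x (φ j + t)‖ := by
          refine le_trans (le_of_eq (Finset.sum_congr rfl fun t _ => ?_))
            (Finset.sum_le_sum_of_subset_of_nonneg
              (Finset.range_subset_range.mpr (hls j).le)
              (fun t _ _ => norm_nonneg _))
          rw [dist_comm, dist_eq_norm]
        calc dist (x (φ j + l j)) (x (φ j))
            = dist (x (φ j)) (x (φ j + l j)) := dist_comm _ _
          _ ≤ ∑ t ∈ Finset.range (l j), dist (x (φ j + t)) (x (φ j + t + 1)) := h1
          _ ≤ _ := h2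
      refine tendsto_iff_dist_tendsto_zero.mpr ?_
      refine squeeze_zero (fun j => dist_nonneg) (fun j =>
        (dist_triangle (x (φ j + l j)) (x (φ j)) xb).trans
          (add_le_add_left (hdist j) _)) ?_
      have h6 : Tendsto (fun j => dist (x (φ j)) xb) atTop (nhds 0) :=
        tendsto_iff_dist_tendsto_zero.mp hφx
      simpa using hB.add h6
    have h1 : Tendsto (fun j => max 0 (f i (x (φ j + l j)))) atTop (nhds 0) := by
      refine squeeze_zero (fun j => le_max_left _ _) (fun j => ?_)
        (hJsup0.comp hψtop)
      exact Finset.le_sup' (fun i' => max 0 (f i' (x (φ j + l j)))) (hlJ j)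
    have h2 : Tendsto (fun j => max 0 (f i (x (φ j + l j)))) atTop
        (nhds (max 0 (f i xb))) :=
      ((continuous_const.max (hcont i)).tendsto xb).comp hxy
    have h3 : max 0 (f i xb) = 0 := tendsto_nhds_unique h2 h1
    have h4 : f i xb ≤ max 0 (f i xb) := le_max_right _ _
    rw [h3] at h4
    exact h4
  -- Fejér monotone with limit point in C gives convergence
  have hant : ∀ k, ‖x (k + 1) - xb‖ ≤ ‖x k - xb‖ := by
    intro k
    have h1 := key xb hxbC k
    have h2 := hquad k
    have h3 : ‖x (k + 1) - xb‖ ^ 2 ≤ ‖x k - xb‖ ^ 2 := by linarith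
    have h4 := Real.sqrt_le_sqrt h3
    rwa [Real.sqrt_sq (norm_nonneg _), Real.sqrt_sq (norm_nonneg _)] at h4
  have hA : Antitone fun k => ‖x k - xb‖ := antitone_nat_of_succ_le hant
  have hbdd : BddBelow (Set.range fun k => ‖x k - xb‖) := by
    refine ⟨0, fun y hy => ?_⟩
    obtain ⟨k, rfl⟩ := hy
    exact norm_nonneg _
  have hL : Tendsto (fun k => ‖x k - xb‖) atTop (nhds (⨅ k, ‖x k - xb‖)) :=
    tendsto_atTop_ciInf hA hbdd
  have hsub0 : Tendsto (fun j => ‖x (φ j) - xb‖) atTop (nhds 0) := by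
    have := tendsto_iff_dist_tendsto_zero.mp hφx
    simpa [dist_eq_norm] using this
  have hsubL : Tendsto (fun j => ‖x (φ j) - xb‖) atTop (nhds (⨅ k, ‖x k - xb‖)) :=
    hL.comp hφ.tendsto_atTop
  have hinf0 : (⨅ k, ‖x k - xb‖) = 0 := tendsto_nhds_unique hsubL hsub0
  rw [hinf0] at hL
  refine ⟨xb, Set.mem_iInter.mpr fun i => hxbC i, ?_⟩
  refine tendsto_iff_dist_tendsto_zero.mpr ?_
  simpa [dist_eq_norm] using hL
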